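/- (Quasi-bang-bang control.) For n ≥ 1, real payoffs v_0,…,v_{n-1}, and admissible constraints (Q_min, Q_max) ∈ T⁺(n) with Q_max − Q_min ∈ ℕ, there exists an optimal control q* ∈ [0,1]^n attaining P(Q_min, Q_max) such that q*_k ∈ {0,1} for all k except at most one index k₀. -/

import Mathlib

theorem quasi_bang_bang (n : ℕ) (hn : 1 ≤ n) (v : ℕ → ℝ)
    (Qmin Qmax : ℝ) (h0 : 0 ≤ Qmin) (h1 : Qmin ≤ Qmax) (h2 : Qmax ≤ n)
    (hdiff : ∃ m : ℕ, Qmax - Qmin = m) :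
    ∃ q : ℕ → ℝ, (∀ k < n, q k ∈ Set.Icc (0:ℝ) 1) ∧
      (∑ k ∈ Finset.range n, q k) ∈ Set.Icc Qmin Qmax ∧
      (∑ k ∈ Finset.range n, q k * v k) =
        sSup {r : ℝ | ∃ p : ℕ → ℝ, (∀ k < n, p k ∈ Set.Icc (0:ℝ) 1) ∧
          (∑ k ∈ Finset.range n, p k) ∈ Set.Icc Qmin Qmax ∧
          r = ∑ k ∈ Finset.range n, p k * v k} ∧
      ∃ k0 : ℕ, ∀ k < n, k ≠ k0 → q k ∈ ({0, 1} : Set ℝ) := by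
  classical
  have hnpos : (0:ℝ) < n := by exact_mod_cast hn
  set K : Set (Fin n → ℝ) :=
    {p | (∀ i, p i ∈ Set.Icc (0:ℝ) 1) ∧ (∑ i, p i) ∈ Set.Icc Qmin Qmax} with hKdef
  set Obj : (Fin n → ℝ) → ℝ := fun p => ∑ i, p i * (v i) with hObjdef
  -- K is nonempty
  have hne : K.Nonempty := by
    refine ⟨fun _ => Qmin / n, fun i => ⟨by positivity, ?_⟩, ?_⟩
    · rw [div_le_one hnpos]; linarith
    · have hs : (∑ _i : Fin n, Qmin / n) = Qmin := by
        rw [Finset.sum_const, Finset.card_univ, Fintype.card_fin, nsmul_eq_mul]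
        field_simp
      rw [hs]; exact ⟨le_refl _, h1⟩
  -- K is closed
  have hKclosed : IsClosed K := by
    have hc1 : IsClosed {p : Fin n → ℝ | ∀ i, p i ∈ Set.Icc (0:ℝ) 1} := by
      have he : {p : Fin n → ℝ | ∀ i, p i ∈ Set.Icc (0:ℝ) 1}
          = ⋂ i, (fun p : Fin n → ℝ => p i) ⁻¹' Set.Icc (0:ℝ) 1 := by
        ext p; simp
      rw [he]
      exact isClosed_iInter fun i => isClosed_Icc.preimage (continuous_apply i)
    have hc2 : IsClosed ((fun p : Fin n → ℝ => ∑ i, p i) ⁻¹' Set.Icc Qmin Qmax) :=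
      isClosed_Icc.preimage (continuous_finset_sum _ fun i _ => continuous_apply i)
    have he2 : K = {p : Fin n → ℝ | ∀ i, p i ∈ Set.Icc (0:ℝ) 1}
        ∩ ((fun p : Fin n → ℝ => ∑ i, p i) ⁻¹' Set.Icc Qmin Qmax) := rfl
    rw [he2]; exact hc1.inter hc2
  -- K is compact
  have hKcomp : IsCompact K := by
    refine IsCompact.of_isClosed_subset
      (isCompact_Icc (a := (0 : Fin n → ℝ)) (b := 1)) hKclosed ?_
    intro p hp
    exact ⟨fun i => (hp.1 i).1, fun i => (hp.1 i).2⟩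
  have hObjc : Continuous Obj := by
    apply continuous_finset_sum
    intro i _
    exact (continuous_apply i).mul continuous_const
  obtain ⟨a, haK, ha⟩ := hKcomp.exists_isMaxOn hne hObjc.continuousOn
  -- fractional index set
  set F : (Fin n → ℝ) → Finset (Fin n) :=
    fun p => Finset.univ.filter (fun i => p i ≠ 0 ∧ p i ≠ 1) with hFdef
  set M : Set ℕ := {m | ∃ p, p ∈ K ∧ IsMaxOn Obj K p ∧ (F p).card = m} with hMdef
  have hMne : M.Nonempty := ⟨(F a).card, a, haK, ha, rfl⟩
  obtain ⟨qf, hqfK, hqfmax, hqfcard⟩ := Nat.sInf_mem hMne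
  -- exchange argument
  have key : ∀ i j : Fin n, i ∈ F qf → j ∈ F qf → i ≠ j → v j ≤ v i → False := by
    intro i j hiF0 hjF0 hij hvji
    have hiF := hiF0; have hjF := hjF0
    simp only [hFdef, Finset.mem_filter, Finset.mem_univ, true_and] at hiF hjF
    obtain ⟨hi0, hi1⟩ := hiF
    obtain ⟨hj0, hj1⟩ := hjF
    have hqi := hqfK.1 i
    have hqj := hqfK.1 j
    have hi1' : qf i < 1 := lt_of_le_of_ne hqi.2 hi1
    have hj0' : 0 < qf j := lt_of_le_of_ne hqj.1 (Ne.symm hj0)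
    set t : ℝ := min (1 - qf i) (qf j) with ht
    have htpos : 0 < t := lt_min (by linarith) hj0'
    have hti : t ≤ 1 - qf i := min_le_left _ _
    have htj : t ≤ qf j := min_le_right _ _
    set q' : Fin n → ℝ :=
      fun k => qf k + (if k = i then t else 0) + (if k = j then -t else 0) with hq'def
    have hq'i : q' i = qf i + t := by simp [hq'def, hij]
    have hq'j : q' j = qf j - t := by
      simp [hq'def, Ne.symm hij]; ring
    have hq'other : ∀ k, k ≠ i → k ≠ j → q' k = qf k := by
      intro k hk1 hk2; simp [hq'def, hk1, hk2]
    have hsum : ∑ k, q' k = ∑ k, qf k := by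
      simp only [hq'def]
      rw [Finset.sum_add_distrib, Finset.sum_add_distrib]
      simp
    have hobj : Obj q' = Obj qf + (t * v i - t * v j) := by
      simp only [hObjdef, hq'def, add_mul]
      rw [Finset.sum_add_distrib, Finset.sum_add_distrib]
      have e1 : ∑ k : Fin n, (if k = i then t else 0) * v k = t * v i := by
        simp [ite_mul]
      have e2 : ∑ k : Fin n, (if k = j then -t else 0) * v k = -(t * v j) := by
        simp [ite_mul]
      rw [e1, e2]; ring
    have hq'K : q' ∈ K := by
      constructor
      · intro k
        by_cases hk1 : k = i
        · subst hk1; rw [hq'i]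
          exact ⟨by linarith [hqi.1], by linarith⟩
        · by_cases hk2 : k = j
          · subst hk2; rw [hq'j]
            exact ⟨by linarith, by linarith [hqj.2]⟩
          · rw [hq'other k hk1 hk2]; exact hqfK.1 k
      · rw [hsum]; exact hqfK.2
    have hle : Obj qf ≤ Obj q' := by
      rw [hobj]
      nlinarith [mul_le_mul_of_nonneg_left hvji htpos.le]
    have hq'max : IsMaxOn Obj K q' := by
      intro x hx
      have hx' : Obj x ≤ Obj qf := hqfmax hx
      simp only [Set.mem_setOf_eq] at hx' ⊢
      linarith
    have hsub : F q' ⊆ F qf := by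
      intro k hk
      by_cases hk1 : k = i
      · subst hk1; exact hiF0
      · by_cases hk2 : k = j
        · subst hk2; exact hjF0
        · simp only [hFdef, Finset.mem_filter, Finset.mem_univ, true_and,
            hq'other k hk1 hk2] at hk ⊢
          exact hk
    have hlt : (F q').card < (F qf).card := by
      apply Finset.card_lt_card
      rw [Finset.ssubset_iff_of_subset hsub]
      rcases min_cases (1 - qf i) (qf j) with ⟨hmin, -⟩ | ⟨hmin, -⟩
      · have hte : t = 1 - qf i := by rw [ht]; exact hmin
        have hq'i1 : q' i = 1 := by rw [hq'i, hte]; ring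
        refine ⟨i, hiF0, ?_⟩
        simp [hFdef, hq'i1]
      · have hte : t = qf j := by rw [ht]; exact hmin
        have hq'j0 : q' j = 0 := by rw [hq'j, hte]; ring
        refine ⟨j, hjF0, ?_⟩
        simp [hFdef, hq'j0]
    have hmem : (F q').card ∈ M := ⟨q', hq'K, hq'max, rfl⟩
    have := Nat.sInf_le hmem
    omega
  have hcard : (F qf).card ≤ 1 := by
    by_contra hcon
    push_neg at hcon
    obtain ⟨i, hi, j, hj, hij⟩ := Finset.one_lt_card.mp hcon
    rcases le_total (v i) (v j) with h | h
    · exact key j i hj hi hij.symm h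
    · exact key i j hi hj hij h
  -- extract exceptional index
  have hk0 : ∃ k0 : Fin n, ∀ k : Fin n, k ≠ k0 → qf k = 0 ∨ qf k = 1 := by
    by_cases hFe : (F qf).Nonempty
    · obtain ⟨k0, hk0⟩ := hFe
      refine ⟨k0, fun k hk => ?_⟩
      by_contra hcon
      push_neg at hcon
      have hkF : k ∈ F qf := by
        simp [hFdef, hcon.1, hcon.2]
      exact hk (Finset.card_le_one.mp hcard k hkF k0 hk0)
    · refine ⟨⟨0, hn⟩, fun k _ => ?_⟩
      by_contra hcon
      push_neg at hcon
      exact hFe ⟨k, by simp [hFdef, hcon.1, hcon.2]⟩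
  obtain ⟨k0f, hk0f⟩ := hk0
  -- back to ℕ → ℝ
  refine ⟨fun k => if h : k < n then qf ⟨k, h⟩ else 0, ?_, ?_, ?_, ?_⟩
  · intro k hk
    simp only [dif_pos hk]
    exact hqfK.1 ⟨k, hk⟩
  · have hs : ∑ k ∈ Finset.range n, (if h : k < n then qf ⟨k, h⟩ else 0) = ∑ i, qf i := by
      rw [← Fin.sum_univ_eq_sum_range (fun k => if h : k < n then qf ⟨k, h⟩ else 0) n]
      apply Finset.sum_congr rfl
      intro i _
      simp [i.isLt]
    rw [hs]
    exact hqfK.2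
  · have hobj_eq : ∑ k ∈ Finset.range n,
        (if h : k < n then qf ⟨k, h⟩ else 0) * v k = Obj qf := by
      rw [hObjdef,
        ← Fin.sum_univ_eq_sum_range (fun k => (if h : k < n then qf ⟨k, h⟩ else 0) * v k) n]
      apply Finset.sum_congr rfl
      intro i _
      simp [i.isLt]
    rw [hobj_eq]
    have hub : ∀ r ∈ {r : ℝ | ∃ p : ℕ → ℝ, (∀ k < n, p k ∈ Set.Icc (0:ℝ) 1) ∧
          (∑ k ∈ Finset.range n, p k) ∈ Set.Icc Qmin Qmax ∧
          r = ∑ k ∈ Finset.range n, p k * v k}, r ≤ Obj qf := by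
      rintro r ⟨p, hp1, hp2, rfl⟩
      have hpK : (fun i : Fin n => p i) ∈ K := by
        refine ⟨fun i => hp1 i i.isLt, ?_⟩
        rwa [Fin.sum_univ_eq_sum_range (fun k => p k) n]
      have hmax := hqfmax hpK
      simp only [Set.mem_setOf_eq, hObjdef] at hmax ⊢
      rwa [Fin.sum_univ_eq_sum_range (fun k => p k * v k) n] at hmax
    have hmemS : Obj qf ∈ {r : ℝ | ∃ p : ℕ → ℝ, (∀ k < n, p k ∈ Set.Icc (0:ℝ) 1) ∧
          (∑ k ∈ Finset.range n, p k) ∈ Set.Icc Qmin Qmax ∧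
          r = ∑ k ∈ Finset.range n, p k * v k} := by
      refine ⟨fun k => if h : k < n then qf ⟨k, h⟩ else 0, ?_, ?_, hobj_eq.symm⟩
      · intro k hk
        simp only [dif_pos hk]
        exact hqfK.1 ⟨k, hk⟩
      · have hs : ∑ k ∈ Finset.range n, (if h : k < n then qf ⟨k, h⟩ else 0) = ∑ i, qf i := by
          rw [← Fin.sum_univ_eq_sum_range (fun k => if h : k < n then qf ⟨k, h⟩ else 0) n]
          apply Finset.sum_congr rfl
          intro i _
          simp [i.isLt]
        rw [hs]
        exact hqfK.2
    exact le_antisymm (le_csSup ⟨Obj qf, hub⟩ hmemS) (csSup_le ⟨Obj qf, hmemS⟩ hub)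
  · refine ⟨(k0f : ℕ), fun k hk hne' => ?_⟩
    simp only [dif_pos hk]
    have hne2 : (⟨k, hk⟩ : Fin n) ≠ k0f := by
      intro e
      exact hne' (by rw [← e])
    rcases hk0f ⟨k, hk⟩ hne2 with h | h <;> simp [h]
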